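/- Let s be a Lie algebra, g = ℝ ∔_ω g₀ the central extension of a symplectic nilpotent Lie algebra (g₀, ω), and suppose s acts on g by derivations D with D(t,0) = 0 and Ran D ⊆ {0} × g₀ (coming from Der(g₀,ω)). Form the semidirect product g̃ = s ⋉ g with bracket [(D₁,x₁),(D₂,x₂)] = ([D₁,D₂], D₁(x₂) − D₂(x₁) + [x₁,x₂]). If the action map s → Der(g₀,ω) is injective, then the center of g̃ equals {0} × z, where z = ℝ × {0} is the center of g. -/

import Mathlib

/-- The bracket of the semidirect product `g̃ = s ⋉ (ℝ ∔_ω g₀)`: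
`[(D₁,x₁),(D₂,x₂)] = ([D₁,D₂], D₁(x₂) − D₂(x₁) + [x₁,x₂])`, where each `D ∈ s`
acts on `g = ℝ × g₀` through `act D` on the `g₀`-component (killing the center). -/
def sdpBracket {s g₀ : Type*} [LieRing s] [LieAlgebra ℝ s]
    [LieRing g₀] [LieAlgebra ℝ g₀]
    (ω : g₀ →ₗ[ℝ] g₀ →ₗ[ℝ] ℝ) (act : s →ₗ[ℝ] (g₀ →ₗ[ℝ] g₀))
    (p q : s × ℝ × g₀) : s × ℝ × g₀ :=
  (⁅p.1, q.1⁆,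
    (ω p.2.2 q.2.2, act p.1 q.2.2 - act q.1 p.2.2 + ⁅p.2.2, q.2.2⁆))

/-- For the semidirect product `g̃ = s ⋉ g` of the central extension
`g = ℝ ∔_ω g₀` by a Lie algebra `s` acting through `Der(g₀, ω)`, if the action is
injective then the center of `g̃` is exactly `{0} × z` with `z = ℝ × {0}`. -/
theorem semidirect_product_center
    {s g₀ : Type*} [LieRing s] [LieAlgebra ℝ s]
    [LieRing g₀] [LieAlgebra ℝ g₀] [Module.Finite ℝ g₀]
    [LieRing.IsNilpotent g₀]
    (ω : g₀ →ₗ[ℝ] g₀ →ₗ[ℝ] ℝ)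
    (hskew : ∀ x y : g₀, ω x y = - ω y x)
    (hnd : ∀ x : g₀, (∀ y : g₀, ω x y = 0) → x = 0)
    (hcoc : ∀ x y z : g₀, ω x ⁅y, z⁆ + ω y ⁅z, x⁆ + ω z ⁅x, y⁆ = 0)
    (act : s →ₗ[ℝ] (g₀ →ₗ[ℝ] g₀))
    (hder : ∀ (D : s) (x y : g₀), act D ⁅x, y⁆ = ⁅act D x, y⁆ + ⁅x, act D y⁆)
    (hωact : ∀ (D : s) (x y : g₀), ω (act D x) y + ω x (act D y) = 0)
    (hlie : ∀ D₁ D₂ : s,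
      act ⁅D₁, D₂⁆ = act D₁ ∘ₗ act D₂ - act D₂ ∘ₗ act D₁)
    (hinj : Function.Injective act) :
    ∀ p : s × ℝ × g₀,
      (∀ q : s × ℝ × g₀, sdpBracket ω act p q = 0) ↔ (p.1 = 0 ∧ p.2.2 = 0) := by
  intro p
  constructor
  · intro h
    have hx : p.2.2 = 0 := by
      apply hnd
      intro y
      have := h (0, 0, y)
      simp only [sdpBracket, Prod.mk_eq_zero, map_zero, LinearMap.zero_apply] at this
      exact this.2.1
    have hD : p.1 = 0 := by
      apply hinj
      rw [map_zero]
      ext y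
      have := h (0, 0, y)
      simp only [sdpBracket, Prod.mk_eq_zero, map_zero, LinearMap.zero_apply, hx] at this
      have h2 := this.2.2
      simpa [hx] using h2
    exact ⟨hD, hx⟩
  · rintro ⟨hD, hx⟩ q
    simp [sdpBracket, hD, hx]
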